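/- Let n ≥ 2. For every 1 ≤ i ≤ n and every root (i',j') of the A_n root system with (i',j') ≠ (i+1,i), there exists 0 ≤ l ≤ n such that both (i,i+1) and (i',j') belong to the Weyl chamber C_{γ_0^l}; i.e., {(i,i+1),(i',j')} < 𝒞_0. -/

import Mathlib

open Fin.NatCast
/-- The Weyl chamber `C_γ = {(γ(i),γ(j)) : i < j}` of the `A_n` root system, for a
permutation `γ` of `{1,…,n+1}` (realized as `Fin (n+1)`). -/
def Cham (n : ℕ) (γ : Equiv.Perm (Fin (n + 1))) : Set (Fin (n + 1) × Fin (n + 1)) :=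
  { x | ∃ i j : Fin (n + 1), i < j ∧ x = (γ i, γ j) }

/-- Value of a subtraction in `Fin (n+1)`. -/
lemma fin_sub_val (n : ℕ) (a b : Fin (n+1)) :
    (a - b).val = if b.val ≤ a.val then a.val - b.val else a.val + (n+1) - b.val := by
  rw [Fin.sub_def]
  simp only
  split
  · have h1 : n + 1 - b.val + a.val = (n+1) + (a.val - b.val) := by omega
    rw [h1, Nat.add_mod_left, Nat.mod_eq_of_lt (by omega)]
  · rw [Nat.mod_eq_of_lt (by omega)]
    omega

/-- Powers of the rotation act by translation. -/
lemma finRotate_pow_apply (n l : ℕ) (x : Fin (n+1)) :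
    (finRotate (n+1) ^ l) x = x + (l : Fin (n+1)) := by
  induction l generalizing x with
  | zero => simp
  | succ l ih =>
    rw [pow_succ, Equiv.Perm.mul_apply, finRotate_succ_apply, ih]
    push_cast
    rw [add_assoc, add_comm (1 : Fin (n+1))]

/-- Membership in the chamber of a power of the rotation. -/
lemma mem_cham_iff (n l : ℕ) (x y : Fin (n+1)) :
    (x, y) ∈ Cham n (finRotate (n+1) ^ l) ↔ x - (l : Fin (n+1)) < y - (l : Fin (n+1)) := by
  constructor
  · rintro ⟨a, b, hab, hx⟩
    rw [Prod.ext_iff] at hx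
    obtain ⟨h1, h2⟩ := hx
    simp only [finRotate_pow_apply] at h1 h2
    rw [h1, h2, add_sub_cancel_right, add_sub_cancel_right]
    exact hab
  · intro hlt
    exact ⟨x - l, y - l, hlt, by simp [finRotate_pow_apply, sub_add_cancel]⟩

/-- For `n ≥ 2`, every simple root `(i,i+1)` (here `(i.castSucc, i.succ)`
for `i : Fin n`) and every root `(i',j') ≠ (i+1,i)` are contained in a common chamber of
`𝒞_0 = {C_{γ₀^l} : 0 ≤ l ≤ n}`, where `γ₀` is the cyclic permutation `(1 2 … n+1)`. -/
theorem simpleRoot_pair_lt_C0 (n : ℕ) (hn : 2 ≤ n) (i : Fin n) (i' j' : Fin (n + 1))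
    (h : i' ≠ j') (hne : (i', j') ≠ (i.succ, i.castSucc)) :
    ∃ l : ℕ, l ≤ n ∧ (i.castSucc, i.succ) ∈ Cham n (finRotate (n + 1) ^ l) ∧
      (i', j') ∈ Cham n (finRotate (n + 1) ^ l) := by
  have hi : i.val < n := i.isLt
  have ha : i'.val < n + 1 := i'.isLt
  have hb : j'.val < n + 1 := j'.isLt
  have hab : i'.val ≠ j'.val := fun hh => h (Fin.ext hh)
  have hne' : ¬(i'.val = i.val + 1 ∧ j'.val = i.val) := by
    rintro ⟨h1, h2⟩
    exact hne (Prod.ext (Fin.ext (by simp [h1])) (Fin.ext (by simp [h2])))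
  have h2v : ((2 : Fin (n+1)) : ℕ) = 2 := by
    have : ((2 : Fin (n+1)) : ℕ) = 2 % (n+1) := rfl
    rw [this, Nat.mod_eq_of_lt (by omega)]
  have h1v : ((1 : Fin (n+1)) : ℕ) = 1 := by
    have : ((1 : Fin (n+1)) : ℕ) = 1 % (n+1) := rfl
    rw [this, Nat.mod_eq_of_lt (by omega)]
  by_cases hc : j'.val = i.val
  · -- use `l = (j' + 2).val`
    refine ⟨(j' + 2 : Fin (n+1)).val, Nat.lt_succ_iff.mp (Fin.is_lt _), ?_, ?_⟩ <;>
      rw [mem_cham_iff] <;> simp only [Fin.cast_val_eq_self] <;>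
      rw [Fin.lt_def, fin_sub_val, fin_sub_val] <;>
      simp only [Fin.coe_castSucc, Fin.val_succ, Fin.val_add, h2v] <;>
      have hL : (j'.val + 2) % (n+1) = if j'.val + 2 ≤ n then j'.val + 2 else 0 := by
        split
        · exact Nat.mod_eq_of_lt (by omega)
        · have : j'.val + 2 = n + 1 := by omega
          rw [this, Nat.mod_self]
    · rw [hL]; split_ifs <;> omega
    · rw [hL]; split_ifs <;> omega
  · -- use `l = (j' + 1).val`
    refine ⟨(j' + 1 : Fin (n+1)).val, Nat.lt_succ_iff.mp (Fin.is_lt _), ?_, ?_⟩ <;>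
      rw [mem_cham_iff] <;> simp only [Fin.cast_val_eq_self] <;>
      rw [Fin.lt_def, fin_sub_val, fin_sub_val] <;>
      simp only [Fin.coe_castSucc, Fin.val_succ, Fin.val_add, h1v] <;>
      have hL : (j'.val + 1) % (n+1) = if j'.val + 1 ≤ n then j'.val + 1 else 0 := by
        split
        · exact Nat.mod_eq_of_lt (by omega)
        · have : j'.val + 1 = n + 1 := by omega
          rw [this, Nat.mod_self]
    · rw [hL]; split_ifs <;> omega
    · rw [hL]; split_ifs <;> omega
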